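/- Let J ≥ 1, let P be a J×J real matrix, and fix j ∈ {1,…,J} such that I − P_{j−1} is invertible, where P_{j−1} := P_{[1:j−1],[1:j−1]}. Define w_{ij} (1 ≤ i ≤ J) and the vector u ∈ ℝ^J as follows: (w_{1j},…,w_{j−1,j})ᵀ = (I − P_{j−1})^{−1} P_{[1:j−1],j}, (w_{jj},…,w_{Jj})ᵀ = P_{[j:J],j} + P_{[j:J],[1:j−1]} (I − P_{j−1})^{−1} P_{[1:j−1],j}, and u_i = w_{ij} for i < j, u_j = 1, u_i = 0 for i > j. Suppose α, λ ∈ ℝ^J satisfy the traffic equations λ_m = α_m + Σ_{i=1}^{J} λ_i P_{im} for every m ∈ {1,…,J}. Then Σ_{i=1}^{J} α_i u_i = Σ_{i=1}^{J} λ_i u_i − Σ_{i=1}^{J} λ_i w_{ij}. -/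

import Mathlib

open Matrix

/-- The coefficients `w_{i j}` defined from the routing matrix `P` at index `j`
(0-based indices: the block `[1:j−1]` of the paper is `{i : i.1 < j.1}`). -/
noncomputable def wVec {J : ℕ} (P : Matrix (Fin J) (Fin J) ℝ) (j : Fin J) : Fin J → ℝ :=
  fun i =>
    let v : Fin j.1 → ℝ :=
      (1 - P.submatrix (Fin.castLE j.2.le) (Fin.castLE j.2.le))⁻¹ *ᵥ
        (fun a => P (Fin.castLE j.2.le a) j)
    if h : i.1 < j.1 then v ⟨i.1, h⟩
    else P i j + ∑ a : Fin j.1, P i (Fin.castLE j.2.le a) * v a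

/-- The vector `u = (w_{1j}, …, w_{j−1,j}, 1, 0, …, 0)`. -/
noncomputable def uVec {J : ℕ} (P : Matrix (Fin J) (Fin J) ℝ) (j : Fin J) : Fin J → ℝ :=
  fun i => if i.1 < j.1 then wVec P j i else if i = j then 1 else 0

theorem stmt9 (J : ℕ) (hJ : 1 ≤ J) (P : Matrix (Fin J) (Fin J) ℝ) (j : Fin J)
    (hinv : IsUnit (1 - P.submatrix (Fin.castLE j.2.le) (Fin.castLE j.2.le)).det)
    (alpha lam : Fin J → ℝ)
    (htraffic : ∀ m : Fin J, lam m = alpha m + ∑ i : Fin J, lam i * P i m) :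
    ∑ i : Fin J, alpha i * uVec P j i
      = ∑ i : Fin J, lam i * uVec P j i - ∑ i : Fin J, lam i * wVec P j i := by
  set Q : Matrix (Fin j.1) (Fin j.1) ℝ :=
    P.submatrix (Fin.castLE j.2.le) (Fin.castLE j.2.le) with hQ
  set c : Fin j.1 → ℝ := fun a => P (Fin.castLE j.2.le a) j with hc
  set v : Fin j.1 → ℝ := (1 - Q)⁻¹ *ᵥ c with hv
  -- the inverse relation
  have hinvrel : (1 - Q) *ᵥ v = c := by
    rw [hv, Matrix.mulVec_mulVec, Matrix.mul_nonsing_inv _ hinv, Matrix.one_mulVec]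
  -- description of wVec
  have hwlt : ∀ (i : Fin J) (h : i.1 < j.1), wVec P j i = v ⟨i.1, h⟩ := by
    intro i h
    simp only [wVec, dif_pos h]
    rfl
  have hwge : ∀ (i : Fin J), ¬ i.1 < j.1 →
      wVec P j i = P i j + ∑ a : Fin j.1, P i (Fin.castLE j.2.le a) * v a := by
    intro i h
    simp only [wVec, dif_neg h]
    rfl
  -- key identity: ∑ m, P i m * u m = w i
  have key : ∀ i : Fin J, ∑ m : Fin J, P i m * uVec P j m = wVec P j i := by
    intro i
    have hu : ∀ m : Fin J, uVec P j m =
        (if h : m.1 < j.1 then v ⟨m.1, h⟩ else 0) + (if m = j then 1 else 0) := by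
      intro m
      by_cases h : m.1 < j.1
      · have hne : m ≠ j := by
          intro e; rw [e] at h; exact lt_irrefl _ h
        simp [uVec, h, hne, hwlt m h]
      · simp [uVec, h]
    have hsum : ∑ m : Fin J, P i m * uVec P j m
        = (∑ a : Fin j.1, P i (Fin.castLE j.2.le a) * v a) + P i j := by
      have h1 : ∑ m : Fin J, P i m * uVec P j m
          = (∑ m : Fin J, (if h : m.1 < j.1 then P i m * v ⟨m.1, h⟩ else 0))
            + ∑ m : Fin J, (if m = j then P i m else 0) := by
        rw [← Finset.sum_add_distrib]
        refine Finset.sum_congr rfl fun m _ => ?_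
        rw [hu m, mul_add]
        congr 1
        · by_cases h : m.1 < j.1 <;> simp [h]
        · by_cases h : m = j <;> simp [h]
      have h2 : ∑ m : Fin J, (if m = j then P i m else 0) = P i j := by
        simp
      have h3 : ∑ m : Fin J, (if h : m.1 < j.1 then P i m * v ⟨m.1, h⟩ else 0)
          = ∑ a : Fin j.1, P i (Fin.castLE j.2.le a) * v a := by
        have hmap : ∑ m ∈ Finset.univ.map (Fin.castLEEmb j.2.le),
            (if h : m.1 < j.1 then P i m * v ⟨m.1, h⟩ else 0)
            = ∑ a : Fin j.1, P i (Fin.castLE j.2.le a) * v a := by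
          rw [Finset.sum_map]
          refine Finset.sum_congr rfl fun a _ => ?_
          have h : ((Fin.castLEEmb j.2.le) a).1 < j.1 := a.2
          rw [dif_pos h]
          rfl
        rw [← hmap]
        refine (Finset.sum_subset (Finset.subset_univ _) ?_).symm
        intro m _ hm
        have h : ¬ m.1 < j.1 := by
          intro h
          exact hm (Finset.mem_map.mpr ⟨⟨m.1, h⟩, Finset.mem_univ _, by
            simp [Fin.castLEEmb, Fin.ext_iff]⟩)
        simp [h]
      rw [h1, h2, h3]
    by_cases h : i.1 < j.1
    · -- use the inverse relation at row ⟨i.1, h⟩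
      have heq := congrFun hinvrel ⟨i.1, h⟩
      have hcast : Fin.castLE j.2.le (⟨i.1, h⟩ : Fin j.1) = i := by
        simp [Fin.ext_iff]
      simp only [Matrix.mulVec, dotProduct, Matrix.sub_apply, Matrix.one_apply,
        sub_mul, Finset.sum_sub_distrib, hQ, Matrix.submatrix_apply, hc, hcast] at heq
      have hdiag : ∑ a : Fin j.1, (if (⟨i.1, h⟩ : Fin j.1) = a then (1:ℝ) else 0) * v a
          = v ⟨i.1, h⟩ := by simp
      rw [hdiag] at heq
      rw [hsum, hwlt i h]
      linarith [heq]
    · rw [hsum, hwge i h]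
      ring
  have halpha : ∀ m : Fin J, alpha m = lam m - ∑ i : Fin J, lam i * P i m := by
    intro m; linarith [htraffic m]
  calc ∑ m : Fin J, alpha m * uVec P j m
      = ∑ m : Fin J, (lam m * uVec P j m - (∑ i : Fin J, lam i * P i m) * uVec P j m) := by
        refine Finset.sum_congr rfl fun m _ => ?_
        rw [halpha m, sub_mul]
    _ = ∑ m : Fin J, lam m * uVec P j m
        - ∑ m : Fin J, (∑ i : Fin J, lam i * P i m) * uVec P j m := by
        rw [Finset.sum_sub_distrib]
    _ = ∑ m : Fin J, lam m * uVec P j m - ∑ i : Fin J, lam i * wVec P j i := by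
        congr 1
        calc ∑ m : Fin J, (∑ i : Fin J, lam i * P i m) * uVec P j m
            = ∑ m : Fin J, ∑ i : Fin J, lam i * (P i m * uVec P j m) := by
              refine Finset.sum_congr rfl fun m _ => ?_
              rw [Finset.sum_mul]
              exact Finset.sum_congr rfl fun i _ => by ring
          _ = ∑ i : Fin J, ∑ m : Fin J, lam i * (P i m * uVec P j m) := Finset.sum_comm
          _ = ∑ i : Fin J, lam i * wVec P j i := by
              refine Finset.sum_congr rfl fun i _ => ?_
              rw [← Finset.mul_sum, key i]
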